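/- Fix a real α > 1/2 and a real τ > 0 with τ²·(2^α − 1) > 1. For an integer d ≥ 2, a real T > 0 and a real φ ∈ [1, d], define r_d(T, φ) = ( Σ_{k=1}^{⌊φ⌋} (k^{−α} − φ^{−α})² + Σ_{k=⌊φ⌋+1}^{d} φ^{−2α}/(4T²) ) / Σ_{k=1}^{d} k^{−2α}. Then, with T_d = (τ/2)·√d and φ_τ = (1 + 1/τ²)^{1/α}, one has lim_{d→∞} r_d(T_d, φ_τ) = 1 / ( ζ(2α)·(1 + τ²) ), where ζ is the Riemann zeta function. -/

import Mathlib

open Filter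

/-- α > 1/2 case of the sign-descent scaling law: with `T_d = (τ/2)·√d` and
`φ_τ = (1 + 1/τ²)^{1/α}`, the normalized sign-descent loss converges to
`1/(ζ(2α)(1 + τ²))`. -/
theorem stmt17 (α τ : ℝ) (hα : 1/2 < α) (hτ : 0 < τ)
    (hcond : 1 < τ ^ 2 * (2 ^ α - 1)) :
    Tendsto
      (fun d : ℕ =>
        ((∑ k ∈ Finset.Icc 1 ⌊(1 + 1 / τ ^ 2) ^ (1/α)⌋₊,
            ((k : ℝ) ^ (-α) - ((1 + 1 / τ ^ 2) ^ (1/α)) ^ (-α)) ^ 2) +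
          ∑ k ∈ Finset.Icc (⌊(1 + 1 / τ ^ 2) ^ (1/α)⌋₊ + 1) d,
            ((1 + 1 / τ ^ 2) ^ (1/α)) ^ (-(2 * α)) /
              (4 * ((τ / 2) * Real.sqrt d) ^ 2)) /
        (∑ k ∈ Finset.Icc 1 d, (k : ℝ) ^ (-(2 * α))))
      atTop
      (nhds (1 / ((riemannZeta ((2 * α : ℝ) : ℂ)).re * (1 + τ ^ 2)))) := by
  have hα0 : (0:ℝ) < α := by linarith
  have hτ2 : (0:ℝ) < τ ^ 2 := by positivity
  set B : ℝ := 1 + 1 / τ ^ 2 with hBdef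
  have hB1 : 1 < B := by
    have : 0 < 1 / τ ^ 2 := by positivity
    simp only [hBdef]; linarith
  have hB0 : (0:ℝ) < B := by linarith
  set φ : ℝ := B ^ (1/α) with hφdef
  have hφ0 : 0 < φ := Real.rpow_pos_of_pos hB0 _
  have hφ1 : 1 < φ :=
    (Real.one_lt_rpow_iff_of_pos hB0).mpr (Or.inl ⟨hB1, by positivity⟩)
  have h2α : B < 2 ^ α := by
    have h1 : 1 / τ ^ 2 < 2 ^ α - 1 := by
      rw [div_lt_iff₀ hτ2]; nlinarith
    simp only [hBdef]; linarith
  have hφ2 : φ < 2 := by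
    have h := Real.rpow_lt_rpow hB0.le h2α (by positivity : (0:ℝ) < 1/α)
    rwa [← Real.rpow_mul (by norm_num : (0:ℝ) ≤ 2),
      mul_one_div_cancel (ne_of_gt hα0), Real.rpow_one] at h
  have hfloor : ⌊φ⌋₊ = 1 := by
    rw [Nat.floor_eq_iff (by positivity)]
    constructor
    · push_cast; linarith
    · push_cast; linarith
  -- key rpow values
  have hA : φ ^ (-α) = B⁻¹ := by
    rw [hφdef, ← Real.rpow_mul hB0.le]
    rw [show (1/α) * (-α) = -1 by field_simp]
    exact Real.rpow_neg_one B
  have hA2 : φ ^ (-(2*α)) = B⁻¹ * B⁻¹ := by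
    rw [show -(2*α) = -α + -α by ring, Real.rpow_add hφ0, hA]
  -- the denominator series
  set f : ℕ → ℝ := fun k => (k:ℝ) ^ (-(2*α)) with hfdef
  have hsum : Summable f := by
    rw [hfdef, Real.summable_nat_rpow]; linarith
  have hf0 : f 0 = 0 := by
    simp only [hfdef, Nat.cast_zero]
    exact Real.zero_rpow (by intro h; nlinarith)
  set Z : ℝ := ∑' n, f n with hZdef
  have hZpos : 0 < Z := by
    refine hsum.tsum_pos (fun i => Real.rpow_nonneg (Nat.cast_nonneg i) _) 1 ?_
    simp only [hfdef, Nat.cast_one, Real.one_rpow]; norm_num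
  have hden : Tendsto (fun d : ℕ => ∑ k ∈ Finset.Icc 1 d, f k) atTop (nhds Z) := by
    have h1 : Tendsto (fun d : ℕ => ∑ k ∈ Finset.range d, f k) atTop (nhds Z) :=
      hsum.hasSum.tendsto_sum_nat
    have heq : ∀ d : ℕ, ∑ k ∈ Finset.Icc 1 d, f k = ∑ k ∈ Finset.range (d+1), f k := by
      intro d
      have hins : Finset.range (d+1) = insert 0 (Finset.Icc 1 d) := by
        ext k; simp only [Finset.mem_range, Finset.mem_insert, Finset.mem_Icc]; omega
      rw [hins, Finset.sum_insert (by simp), hf0, zero_add]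
    simp only [heq]
    exact h1.comp (tendsto_add_atTop_nat 1)
  -- zeta value
  have hzeta : (riemannZeta ((2 * α : ℝ) : ℂ)).re = Z := by
    rw [zeta_eq_tsum_one_div_nat_cpow (by simp; linarith)]
    have hterm : ∀ n : ℕ, (1 : ℂ) / (n:ℂ) ^ ((2*α : ℝ):ℂ) = ((f n : ℝ) : ℂ) := by
      intro n
      have hn : (0:ℝ) ≤ (n:ℝ) := Nat.cast_nonneg n
      rw [show ((n:ℂ)) = (((n:ℝ)):ℂ) by push_cast; ring,
        ← Complex.ofReal_cpow hn, hfdef]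
      simp only
      rw [Real.rpow_neg hn, ← Complex.ofReal_one, ← Complex.ofReal_div]
      norm_num
    rw [tsum_congr hterm, ← Complex.ofReal_tsum, Complex.ofReal_re, hZdef]
  -- eventual form of the numerator
  set N : ℝ := (1 - B⁻¹)^2 + B⁻¹ * B⁻¹ / τ ^ 2 with hNdef
  have hnum : Tendsto
      (fun d : ℕ => (1 - B⁻¹)^2 + (B⁻¹ * B⁻¹ / τ ^ 2) * (1 - 1/(d:ℝ)))
      atTop (nhds N) := by
    have : Tendsto (fun d : ℕ => 1 - 1/(d:ℝ)) atTop (nhds 1) := by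
      have := tendsto_one_div_atTop_nhds_zero_nat (𝕜 := ℝ)
      have h2 := (tendsto_const_nhds (x := (1:ℝ)) (f := atTop)).sub this
      simpa using h2
    have h3 := (tendsto_const_nhds (x := ((1 - B⁻¹)^2 : ℝ)) (f := atTop)).add
      ((tendsto_const_nhds (x := (B⁻¹ * B⁻¹ / τ ^ 2 : ℝ)) (f := atTop)).mul this)
    simpa [hNdef] using h3
  have hlim : Tendsto
      (fun d : ℕ => ((1 - B⁻¹)^2 + (B⁻¹ * B⁻¹ / τ ^ 2) * (1 - 1/(d:ℝ))) /
        (∑ k ∈ Finset.Icc 1 d, f k)) atTop (nhds (N / Z)) :=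
    hnum.div hden (ne_of_gt hZpos)
  have hNval : N / Z = 1 / ((riemannZeta ((2 * α : ℝ) : ℂ)).re * (1 + τ ^ 2)) := by
    rw [hzeta]
    have hN : N = 1 / (1 + τ ^ 2) := by
      rw [hNdef, hBdef]
      have hτ2' : τ ^ 2 ≠ 0 := ne_of_gt hτ2
      have h1τ : (1:ℝ) + τ ^ 2 ≠ 0 := by positivity
      field_simp
      ring
    rw [hN]
    field_simp
  rw [← hNval]
  refine hlim.congr' ?_
  filter_upwards [eventually_ge_atTop 2] with d hd
  have hd0 : (0:ℝ) < (d:ℝ) := by positivity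
  congr 1
  rw [hfloor]
  -- first sum
  have hs1 : ∑ k ∈ Finset.Icc (1:ℕ) 1, ((k : ℝ) ^ (-α) - φ ^ (-α)) ^ 2 = (1 - B⁻¹)^2 := by
    rw [Finset.Icc_self, Finset.sum_singleton, hA]
    norm_num
  -- second sum
  have hcard : (Finset.Icc 2 d).card = d - 1 := by
    rw [Nat.card_Icc]; omega
  have hT : 4 * ((τ / 2) * Real.sqrt d) ^ 2 = τ ^ 2 * d := by
    rw [mul_pow, Real.sq_sqrt hd0.le]; ring
  have hs2 : ∑ k ∈ Finset.Icc (1+1) d, φ ^ (-(2*α)) / (4 * ((τ / 2) * Real.sqrt d) ^ 2)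
      = (B⁻¹ * B⁻¹ / τ ^ 2) * (1 - 1/(d:ℝ)) := by
    rw [Finset.sum_const, hcard, hA2, hT, nsmul_eq_mul]
    have hdc : ((d - 1 : ℕ) : ℝ) = (d:ℝ) - 1 := by
      have : (1:ℕ) ≤ d := by omega
      push_cast [this]; ring
    rw [hdc]
    have hdne : (d:ℝ) ≠ 0 := ne_of_gt hd0
    field_simp
  rw [hs1, hs2]
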